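/- Let N = 2M ≥ 4 be an even integer. Then the stabiliser of x* in G is exactly the four-element set {id, r^M ∘ s, r^M ∘ c, s ∘ c}, and the orbit {g x* : g ∈ G} has exactly N elements. -/

import Mathlib

set_option linter.unusedSectionVars false

/-- The cyclic shift `(r x)ᵢ = x_{i+1}` as a linear automorphism of `ℝ^N`. -/
noncomputable def rmap (N : ℕ) [NeZero N] : (Fin N → ℝ) ≃ₗ[ℝ] (Fin N → ℝ) :=
  LinearEquiv.funCongrLeft ℝ ℝ (Equiv.addRight (1 : Fin N))

/-- The reflection `(s x)ᵢ = x_{N+1-i}` (in cyclic 0-based indexing, `(s x)ᵢ = x_{-i-1}`)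
as a linear automorphism of `ℝ^N`. -/
noncomputable def smap (N : ℕ) [NeZero N] : (Fin N → ℝ) ≃ₗ[ℝ] (Fin N → ℝ) :=
  LinearEquiv.funCongrLeft ℝ ℝ ((Equiv.neg (Fin N)).trans (Equiv.subRight (1 : Fin N)))

/-- The spin flip `(c x)ᵢ = -xᵢ` as a linear automorphism of `ℝ^N`. -/
noncomputable def cmap (N : ℕ) : (Fin N → ℝ) ≃ₗ[ℝ] (Fin N → ℝ) :=
  LinearEquiv.neg ℝ

/-- The symmetry group `G ≅ D_N × ℤ₂` of the model: the group of linear automorphisms of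
`ℝ^N` generated by `r`, `s` and `c`. -/
noncomputable def Gsym (N : ℕ) [NeZero N] : Subgroup ((Fin N → ℝ) ≃ₗ[ℝ] (Fin N → ℝ)) :=
  Subgroup.closure {rmap N, smap N, cmap N}

open scoped Fin.NatCast Fin.CommRing

section Aux
variable (N : ℕ) [NeZero N]

lemma mul_apply' (f g : (Fin N → ℝ) ≃ₗ[ℝ] (Fin N → ℝ)) (y : Fin N → ℝ) :
    (f * g) y = f (g y) := rfl

lemma rmap_apply (x : Fin N → ℝ) (i : Fin N) : rmap N x i = x (i + 1) := by
  simp [rmap, LinearEquiv.funCongrLeft]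

lemma smap_apply (x : Fin N → ℝ) (i : Fin N) : smap N x i = x (-i - 1) := by
  simp [smap, LinearEquiv.funCongrLeft]

lemma cmap_apply (x : Fin N → ℝ) : cmap N x = -x := rfl

lemma rmap_pow_apply (t : ℕ) (x : Fin N → ℝ) (i : Fin N) :
    (rmap N ^ t) x i = x (i + (t : Fin N)) := by
  induction t generalizing i with
  | zero => simp
  | succ n ih =>
    rw [pow_succ', mul_apply', rmap_apply, ih]
    congr 1
    push_cast
    ring

lemma rmap_pow_N : rmap N ^ N = 1 := by
  ext x i
  rw [rmap_pow_apply]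
  simp

lemma smap_mul_smap : smap N * smap N = 1 := by
  ext x i
  rw [mul_apply', smap_apply, smap_apply]
  congr 1
  ring

lemma cmap_mul_cmap : cmap N * cmap N = 1 := by
  ext x i
  simp [mul_apply', cmap_apply]

lemma cmap_comm (g : (Fin N → ℝ) ≃ₗ[ℝ] (Fin N → ℝ)) : cmap N * g = g * cmap N := by
  ext x i
  simp [mul_apply', cmap_apply]

lemma srsr : smap N * rmap N * smap N * rmap N = 1 := by
  ext x i
  rw [mul_apply', mul_apply', mul_apply', smap_apply, rmap_apply, smap_apply, rmap_apply]
  congr 1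
  ring

lemma rmap_pow_reduce (m : ℕ) : rmap N ^ m = rmap N ^ (m % N) :=
  pow_eq_pow_mod m (rmap_pow_N N)

lemma rmap_zpow_N : rmap N ^ (N : ℤ) = 1 := by rw [zpow_natCast, rmap_pow_N]

lemma rmap_zpow_reduce (k : ℤ) : rmap N ^ k = rmap N ^ ((k % N).toNat) := by
  have h : ((k % N).toNat : ℤ) = k % N :=
    Int.toNat_of_nonneg (Int.emod_nonneg k (by exact_mod_cast (NeZero.ne N)))
  conv_rhs => rw [← zpow_natCast (rmap N) ((k % (N:ℤ)).toNat)]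
  rw [h]
  conv_lhs => rw [← Int.mul_ediv_add_emod k N]
  rw [zpow_add, zpow_mul, rmap_zpow_N, one_zpow, one_mul]

lemma smap_inv : (smap N)⁻¹ = smap N := inv_eq_of_mul_eq_one_right (smap_mul_smap N)
lemma cmap_inv : (cmap N)⁻¹ = cmap N := inv_eq_of_mul_eq_one_right (cmap_mul_cmap N)

lemma s_conj (k : ℤ) : smap N * rmap N ^ k * smap N = rmap N ^ (-k) := by
  have h1 : smap N * rmap N * (smap N)⁻¹ = (rmap N)⁻¹ := by
    rw [smap_inv]
    have h := srsr N
    have h' : (smap N * rmap N * smap N) * rmap N = 1 := by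
      simpa [mul_assoc] using h
    have h2 := inv_eq_of_mul_eq_one_left h'
    rw [← h2]
  have h2 := map_zpow (MulAut.conj (smap N)) (rmap N) k
  simp only [MulAut.conj_apply] at h2
  rw [h1] at h2
  rw [smap_inv] at h2
  rw [mul_assoc] at h2 ⊢
  rw [h2, inv_zpow, ← zpow_neg]

/-- normal form -/
noncomputable def nf (k : ℤ) (a b : Bool) : (Fin N → ℝ) ≃ₗ[ℝ] (Fin N → ℝ) :=
  rmap N ^ k * (if a then smap N else 1) * (if b then cmap N else 1)

lemma nf_mul (k k' : ℤ) (a b a' b' : Bool) :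
    nf N k a b * nf N k' a' b' = nf N (k + (if a then -k' else k')) (xor a a') (xor b b') := by
  have hsr0 : ∀ m : ℤ, smap N * rmap N ^ m = rmap N ^ (-m) * smap N := by
    intro m
    calc smap N * rmap N ^ m = (smap N * rmap N ^ m * smap N) * smap N := by
          rw [mul_assoc, smap_mul_smap, mul_one]
      _ = rmap N ^ (-m) * smap N := by rw [s_conj]
  have hsr : ∀ (m : ℤ) g, smap N * (rmap N ^ m * g) = rmap N ^ (-m) * (smap N * g) := by
    intro m g; rw [← mul_assoc, hsr0, mul_assoc]
  have hcr0 : ∀ m : ℤ, cmap N * rmap N ^ m = rmap N ^ m * cmap N := fun m => cmap_comm N _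
  have hcr : ∀ (m : ℤ) g, cmap N * (rmap N ^ m * g) = rmap N ^ m * (cmap N * g) := by
    intro m g; rw [← mul_assoc, hcr0, mul_assoc]
  have hcs0 : cmap N * smap N = smap N * cmap N := cmap_comm N _
  have hcs : ∀ g, cmap N * (smap N * g) = smap N * (cmap N * g) := by
    intro g; rw [← mul_assoc, hcs0, mul_assoc]
  have hss : ∀ g, smap N * (smap N * g) = g := by
    intro g; rw [← mul_assoc, smap_mul_smap, one_mul]
  have hcc : ∀ g, cmap N * (cmap N * g) = g := by
    intro g; rw [← mul_assoc, cmap_mul_cmap, one_mul]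
  have hrr0 : ∀ u v : ℤ, rmap N ^ u * rmap N ^ v = rmap N ^ (u + v) := by
    intro u v; rw [zpow_add]
  have hrr : ∀ (u v : ℤ) g, rmap N ^ u * (rmap N ^ v * g) = rmap N ^ (u + v) * g := by
    intro u v g; rw [← mul_assoc, hrr0]
  unfold nf
  set_option maxHeartbeats 2000000 in
  cases a <;> cases a' <;> cases b <;> cases b' <;>
    (try simp only [Bool.false_eq_true, Bool.true_eq_false, reduceIte, if_true, if_false,
      Bool.xor_false, Bool.xor_true, Bool.not_true, Bool.not_false,
      Bool.false_xor, Bool.true_xor, Bool.xor_self, mul_one, one_mul]) <;>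
    (try simp only [mul_assoc]) <;>
    (try simp only [hsr, hsr0, hcr, hcr0, hcs, hcs0, hss, hcc, smap_mul_smap, cmap_mul_cmap,
      hrr, hrr0, mul_one, one_mul]) <;>
    (try rw [zpow_add, mul_assoc]) <;> (try rw [zpow_add]) <;> (try group)

lemma nf_inv (k : ℤ) (a b : Bool) : (nf N k a b)⁻¹ = nf N (if a then k else -k) a b := by
  apply inv_eq_of_mul_eq_one_right
  rw [nf_mul]
  cases a <;> cases b <;> simp [nf]

lemma Gsym_nf {g : (Fin N → ℝ) ≃ₗ[ℝ] (Fin N → ℝ)} (hg : g ∈ Gsym N) :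
    ∃ k a b, g = nf N k a b := by
  induction hg using Subgroup.closure_induction with
  | mem y hy =>
    simp only [Set.mem_insert_iff, Set.mem_singleton_iff] at hy
    rcases hy with h | h | h
    · exact ⟨1, false, false, by simp [nf, h]⟩
    · exact ⟨0, true, false, by simp [nf, h]⟩
    · exact ⟨0, false, true, by simp [nf, h]⟩
  | one => exact ⟨0, false, false, by simp [nf]⟩
  | mul y z hy hz ihy ihz =>
    obtain ⟨k, a, b, rfl⟩ := ihy
    obtain ⟨k', a', b', rfl⟩ := ihz
    exact ⟨_, _, _, nf_mul N k k' a b a' b'⟩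
  | inv y hy ihy =>
    obtain ⟨k, a, b, rfl⟩ := ihy
    exact ⟨_, _, _, nf_inv N k a b⟩

lemma pow_pow_apply (a b : ℕ) (y : Fin N → ℝ) :
    (rmap N ^ a) ((rmap N ^ b) y) = (rmap N ^ (a + b)) y := by
  rw [pow_add, mul_apply']

end Aux

section Xlem

variable (N M : ℕ) [NeZero N] (hNM : N = 2 * M) (hM : 2 ≤ M)
  (x : Fin N → ℝ) (hx : ∀ i : Fin N, x i = if (i : ℕ) < M then 1 else -1)

include hNM hM hx

lemma smap_x : smap N x = -x := by
  ext i
  rw [smap_apply, Pi.neg_apply]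
  have hiN : (i : ℕ) < N := i.isLt
  have hval : (-i - 1 : Fin N) = ((N - 1 - (i : ℕ) : ℕ) : Fin N) := by
    have hsum : ((N - 1 - (i : ℕ) : ℕ) : Fin N) + (i + 1) = 0 := by
      have h1 : ((N - 1 - (i : ℕ) : ℕ) : Fin N) + (((i : ℕ) : ℕ) : Fin N) + ((1 : ℕ) : Fin N)
          = ((N - 1 - (i : ℕ) + (i : ℕ) + 1 : ℕ) : Fin N) := by push_cast; ring
      have h2 : (N - 1 - (i : ℕ) + (i : ℕ) + 1 : ℕ) = N := by omega
      rw [h2, Fin.natCast_self] at h1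
      simpa [Fin.cast_val_eq_self, add_assoc] using h1
    have := eq_neg_of_add_eq_zero_left hsum
    rw [eq_comm, this]
    ring
  rw [hval, hx, hx]
  have hv : (((N - 1 - (i : ℕ) : ℕ) : Fin N) : ℕ) = N - 1 - (i : ℕ) :=
    Fin.val_cast_of_lt (by omega)
  rw [hv]
  rcases lt_or_ge (i : ℕ) M with h | h
  · rw [if_neg (by omega), if_pos h]; try norm_num
  · rw [if_pos (by omega), if_neg (by omega)]; try norm_num

lemma rM_x : (rmap N ^ M) x = -x := by
  ext i
  rw [rmap_pow_apply, Pi.neg_apply]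
  have hiN : (i : ℕ) < N := i.isLt
  have hval : ((i + (M : Fin N) : Fin N) : ℕ) = ((i : ℕ) + M) % N := by
    rw [Fin.add_def, Fin.val_cast_of_lt (by omega)]
  rw [hx, hx, hval]
  rcases lt_or_ge (i : ℕ) M with h | h
  · rw [Nat.mod_eq_of_lt (by omega), if_neg (by omega), if_pos h]; try norm_num
  · have h1 : ((i : ℕ) + M) % N = (i : ℕ) - M := by
      rw [Nat.mod_eq_sub_mod (by omega), Nat.mod_eq_of_lt (by omega)]
      omega
    rw [h1, if_pos (by omega), if_neg (by omega)]; try norm_num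

lemma fix0 : ∀ t : ℕ, t < N → (rmap N ^ t) x = x → t = 0 := by
  intro t ht hfix
  by_contra h0
  have key : ∀ i : Fin N, x (i + (t : Fin N)) = x i := by
    intro i
    have h := congrFun hfix i
    rwa [rmap_pow_apply] at h
  rcases lt_or_ge t M with h | h
  · -- 0 < t < M : use i = M - t
    have := key ((M - t : ℕ) : Fin N)
    have h1 : ((M - t : ℕ) : Fin N) + (t : Fin N) = ((M : ℕ) : Fin N) := by
      push_cast [← Nat.cast_add]
      congr 1
      omega
    rw [h1, hx, hx] at this
    rw [Fin.val_cast_of_lt (show M < N by omega), Fin.val_cast_of_lt (show M - t < N by omega)]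
      at this
    rw [if_neg (by omega), if_pos (by omega)] at this
    norm_num at this
  · -- M ≤ t < N : use i = 0
    have := key 0
    have h1 : (0 : Fin N) + (t : Fin N) = (t : Fin N) := by rw [zero_add]
    rw [h1, hx, hx] at this
    rw [Fin.val_cast_of_lt ht] at this
    have h0v : ((0 : Fin N) : ℕ) = 0 := rfl
    rw [h0v, if_neg (by omega), if_pos (by omega)] at this
    norm_num at this

lemma rpow_inj : ∀ t u : ℕ, t < N → u < N →
    (rmap N ^ t) x = (rmap N ^ u) x → t = u := by
  intro t u ht hu h
  have h2 : (rmap N ^ (N - u + t)) x = (rmap N ^ (N - u + u)) x := by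
    rw [← pow_pow_apply, ← pow_pow_apply, h]
  have h3 : N - u + u = N := by omega
  rw [h3, rmap_pow_N] at h2
  have h4 : (rmap N ^ ((N - u + t) % N)) x = x := by
    rw [← rmap_pow_reduce]
    simpa using h2
  have h5 : (N - u + t) % N = 0 :=
    fix0 N M hNM hM x hx _ (Nat.mod_lt _ (Nat.pos_of_ne_zero (NeZero.ne N))) h4
  rcases lt_or_ge (N - u + t) N with hc | hc
  · rw [Nat.mod_eq_of_lt hc] at h5
    omega
  · rw [Nat.mod_eq_sub_mod hc, Nat.mod_eq_of_lt (by omega)] at h5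
    omega

end Xlem

/-- The stabiliser in `G` of the ground-state configuration `x*`
(`M` coordinates `+1` followed by `M` coordinates `-1`) is `{id, r^M s, r^M c, s c}`,
and its orbit under `G` has exactly `N` elements. -/
theorem stmt_15 (N M : ℕ) (hNM : N = 2 * M) (hM : 2 ≤ M) [NeZero N]
    (x : Fin N → ℝ) (hx : ∀ i : Fin N, x i = if (i : ℕ) < M then 1 else -1) :
    {g : (Fin N → ℝ) ≃ₗ[ℝ] (Fin N → ℝ) | g ∈ Gsym N ∧ g x = x} =
      {1, rmap N ^ M * smap N, rmap N ^ M * cmap N, smap N * cmap N} ∧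
    {y : Fin N → ℝ | ∃ g ∈ Gsym N, g x = y}.ncard = N := by
  have hNpos : 0 < N := Nat.pos_of_ne_zero (NeZero.ne N)
  have hMN : M < N := by omega
  have hsx : smap N x = -x := smap_x N M hNM hM x hx
  have hMx : (rmap N ^ M) x = -x := rM_x N M hNM hM x hx
  have hinj := rpow_inj N M hNM hM x hx
  have hfix0 := fix0 N M hNM hM x hx
  have hr : rmap N ∈ Gsym N := Subgroup.subset_closure (by simp)
  have hs : smap N ∈ Gsym N := Subgroup.subset_closure (by simp)
  have hc : cmap N ∈ Gsym N := Subgroup.subset_closure (by simp)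
  constructor
  · ext g
    simp only [Set.mem_setOf_eq, Set.mem_insert_iff, Set.mem_singleton_iff]
    constructor
    · rintro ⟨hg, hgx⟩
      obtain ⟨k, a, b, rfl⟩ := Gsym_nf N hg
      set t := (k % (N : ℤ)).toNat with htdef
      have hkt : rmap N ^ k = rmap N ^ t := rmap_zpow_reduce N k
      have ht : t < N := by
        have h1 : 0 ≤ k % (N : ℤ) := Int.emod_nonneg k (by exact_mod_cast NeZero.ne N)
        have h2 : k % (N : ℤ) < N := Int.emod_lt_of_pos k (by exact_mod_cast hNpos)
        omega
      have hnf_ff : nf N k false false x = (rmap N ^ k) x := by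
        simp [nf, mul_apply']
      have hnf_ft : nf N k false true x = -((rmap N ^ k) x) := by
        simp [nf, mul_apply', cmap_apply, map_neg]
      have hnf_tf : nf N k true false x = -((rmap N ^ k) x) := by
        simp [nf, mul_apply', hsx, map_neg]
      have hnf_tt : nf N k true true x = (rmap N ^ k) x := by
        simp [nf, mul_apply', cmap_apply, map_neg, hsx, neg_neg]
      cases a <;> cases b
      · -- a = false, b = false : g = r^k
        rw [hnf_ff] at hgx
        have ht0 : t = 0 := hfix0 t ht (by rw [← hkt]; exact hgx)
        left
        simp [nf, hkt, ht0]
      · -- a = false, b = true : g = r^k * c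
        rw [hnf_ft] at hgx
        have : (rmap N ^ t) x = (rmap N ^ M) x := by
          rw [← hkt, hMx]
          simpa using congrArg Neg.neg hgx
        have htM : t = M := hinj t M ht hMN this
        right; right; left
        simp [nf, hkt, htM]
      · -- a = true, b = false : g = r^k * s
        rw [hnf_tf] at hgx
        have : (rmap N ^ t) x = (rmap N ^ M) x := by
          rw [← hkt, hMx]
          simpa using congrArg Neg.neg hgx
        have htM : t = M := hinj t M ht hMN this
        right; left
        simp [nf, hkt, htM]
      · -- a = true, b = true : g = r^k * s * c
        rw [hnf_tt] at hgx
        have ht0 : t = 0 := hfix0 t ht (by rw [← hkt]; exact hgx)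
        right; right; right
        simp [nf, hkt, ht0]
    · rintro (rfl | rfl | rfl | rfl)
      · exact ⟨Subgroup.one_mem _, rfl⟩
      · refine ⟨Subgroup.mul_mem _ (Subgroup.pow_mem _ hr M) hs, ?_⟩
        rw [mul_apply', hsx, map_neg, hMx, neg_neg]
      · refine ⟨Subgroup.mul_mem _ (Subgroup.pow_mem _ hr M) hc, ?_⟩
        rw [mul_apply', cmap_apply, map_neg, hMx, neg_neg]
      · refine ⟨Subgroup.mul_mem _ hs hc, ?_⟩
        rw [mul_apply', cmap_apply, map_neg, hsx, neg_neg]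
  · have horb : {y : Fin N → ℝ | ∃ g ∈ Gsym N, g x = y}
        = Set.range (fun kk : Fin N => (rmap N ^ (kk : ℕ)) x) := by
      ext y
      simp only [Set.mem_setOf_eq, Set.mem_range]
      constructor
      · rintro ⟨g, hg, rfl⟩
        obtain ⟨k, a, b, rfl⟩ := Gsym_nf N hg
        set t := (k % (N : ℤ)).toNat with htdef
        have hkt : rmap N ^ k = rmap N ^ t := rmap_zpow_reduce N k
        have ht : t < N := by
          have h1 : 0 ≤ k % (N : ℤ) := Int.emod_nonneg k (by exact_mod_cast NeZero.ne N)
          have h2 : k % (N : ℤ) < N := Int.emod_lt_of_pos k (by exact_mod_cast hNpos)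
          omega
        have hneg : (rmap N ^ t) (-x) = (rmap N ^ ((t + M) % N)) x := by
          rw [← hMx, pow_pow_apply, ← rmap_pow_reduce]
        have hnf_ff : nf N k false false x = (rmap N ^ t) x := by
          simp [nf, mul_apply', hkt]
        have hnf_ft : nf N k false true x = (rmap N ^ t) (-x) := by
          simp [nf, mul_apply', cmap_apply, map_neg, hkt]
        have hnf_tf : nf N k true false x = (rmap N ^ t) (-x) := by
          simp [nf, mul_apply', hsx, map_neg, hkt]
        have hnf_tt : nf N k true true x = (rmap N ^ t) x := by
          simp [nf, mul_apply', cmap_apply, map_neg, hsx, neg_neg, hkt]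
        cases a <;> cases b
        · exact ⟨⟨t, ht⟩, hnf_ff.symm⟩
        · exact ⟨⟨(t + M) % N, Nat.mod_lt _ hNpos⟩, by rw [hnf_ft, hneg]⟩
        · exact ⟨⟨(t + M) % N, Nat.mod_lt _ hNpos⟩, by rw [hnf_tf, hneg]⟩
        · exact ⟨⟨t, ht⟩, hnf_tt.symm⟩
      · rintro ⟨kk, rfl⟩
        exact ⟨rmap N ^ (kk : ℕ), Subgroup.pow_mem _ hr _, rfl⟩
    rw [horb, ← Set.image_univ,
      Set.ncard_image_of_injective _ (fun a b hab => Fin.ext (hinj _ _ a.isLt b.isLt hab)),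
      Set.ncard_univ, Nat.card_eq_fintype_card, Fintype.card_fin]
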